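/- Let a ≥ 2 be even, k ≥ 1, and 1 ≤ i ≤ a/2. Let P_{k,i} be the partition (a^k, i + a/2, i), i.e. k parts equal to a followed by a part i + a/2 and a part i. Let Λ_{k,i} = {n ∈ ℤ : n ≡ i − k − 2 (mod a/2 + 1)}. Then the downward displacement of P_{k,i} with respect to Λ_{k,i} equals P_{k,i−1} = (a^k, (i−1) + a/2, i−1); and the upward displacement of P_{k,i} with respect to Λ_{k,i} equals P_{k,i} unless a ≡ i − k − 2 (mod a/2 + 1). -/

import Mathlib

open scoped Classical

/-- A partition: weakly decreasing, eventually zero sequence of nonnegative integers. -/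
def IsPartition (P : ℕ → ℕ) : Prop :=
  (∀ i, P (i + 1) ≤ P i) ∧ ∃ N, ∀ n ≥ N, P n = 0

/-- An arithmetic progression: a proper subset of ℤ whose set of differences is
closed under addition. -/
def IsAP (Λ : Set ℤ) : Prop :=
  Λ ≠ Set.univ ∧
    ∀ a b c d : ℤ, a ∈ Λ → b ∈ Λ → c ∈ Λ → d ∈ Λ →
      ∃ x ∈ Λ, ∃ y ∈ Λ, x - y = (a - b) + (c - d)

/-- Upward displacement of a partition with respect to an arithmetic progression.
The convention `P_{-1} = ∞` is encoded by the disjunct `i = 0`. -/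
noncomputable def upDisp (P : ℕ → ℕ) (Λ : Set ℤ) : ℕ → ℕ :=
  fun i => if ((P i : ℤ) - i) ∈ Λ ∧ (i = 0 ∨ P i < P (i - 1)) then P i + 1 else P i

/-- Downward displacement of a partition with respect to an arithmetic progression. -/
noncomputable def downDisp (P : ℕ → ℕ) (Λ : Set ℤ) : ℕ → ℕ :=
  fun i => if ((P i : ℤ) - i - 1) ∈ Λ ∧ P (i + 1) < P i then P i - 1 else P i

/-- The sum `|P|` of the parts of a partition. -/
noncomputable def psum (P : ℕ → ℕ) : ℕ := ∑ᶠ i, P i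

/-- Two partitions are linked if some arithmetic progression displaces one to the other. -/
def Linked (P Q : ℕ → ℕ) : Prop :=
  ∃ Λ : Set ℤ, IsAP Λ ∧ Q = upDisp P Λ ∧ P = downDisp Q Λ

/-- `k`-linked: linked with sums differing by `k`. -/
def KLinked (k : ℕ) (P Q : ℕ → ℕ) : Prop :=
  Linked P Q ∧ psum Q = psum P + k

/-- A valid sequence of partitions: adjacent pairs are 1-linked or 2-linked. -/
def ValidSeq (n : ℕ) (s : ℕ → ℕ → ℕ) : Prop :=
  (∀ j ≤ n, IsPartition (s j)) ∧
    ∀ j < n, KLinked 1 (s j) (s (j + 1)) ∨ KLinked 2 (s j) (s (j + 1))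

/-- The difficulty `δ(P)`: the least number of 1-linked adjacent pairs in a valid
sequence from the empty partition to `P`. -/
noncomputable def delta (P : ℕ → ℕ) : ℕ :=
  sInf { c | ∃ n s, ValidSeq n s ∧ s 0 = (fun _ => 0) ∧ s n = P ∧
    c = ((Finset.range n).filter fun j => KLinked 1 (s j) (s (j + 1))).card }

/-- The conjugate (dual) partition: `P*_n = #{m : P_m > n}`. -/
noncomputable def conj (P : ℕ → ℕ) : ℕ → ℕ := fun n => Set.ncard { m | n < P m }
/-- Displacement of the intermediate partitions `P_{k,i} = (a^k, i + a/2, i)` along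
`Λ_{k,i} = {n ≡ i - k - 2 mod (a/2 + 1)}`: the downward displacement is `P_{k,i-1}`,
and the upward displacement is `P_{k,i}` unless `a ≡ i - k - 2 mod (a/2 + 1)`. -/
theorem stmt15 (a k i : ℕ) (ha2 : 2 ≤ a) (haeven : Even a) (hk : 1 ≤ k)
    (hi1 : 1 ≤ i) (hi2 : i ≤ a / 2) :
    let Pki : ℕ → ℕ := fun n =>
      if n < k then a else if n = k then i + a / 2 else if n = k + 1 then i else 0
    let Λ : Set ℤ := {n : ℤ | n ≡ (i : ℤ) - k - 2 [ZMOD ((a / 2 : ℕ) : ℤ) + 1]}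
    downDisp Pki Λ = (fun n =>
      if n < k then a else if n = k then (i - 1) + a / 2 else if n = k + 1 then i - 1 else 0) ∧
      (¬ ((a : ℤ) ≡ (i : ℤ) - k - 2 [ZMOD ((a / 2 : ℕ) : ℤ) + 1]) → upDisp Pki Λ = Pki) := by
  intro Pki Λ
  have hdvd2 : 2 ∣ a := haeven.two_dvd
  have key : ∀ c : ℤ, 0 < c → c < ((a / 2 : ℕ) : ℤ) + 1 → ¬ ((((a / 2 : ℕ) : ℤ) + 1) ∣ c) := by
    intro c h1 h2 h
    exact absurd (Int.le_of_dvd h1 h) (by omega)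
  have hmem : ∀ x : ℤ, x ∈ Λ ↔ (((a / 2 : ℕ) : ℤ) + 1) ∣ ((i : ℤ) - k - 2 - x) := by
    intro x
    simp only [Λ, Set.mem_setOf_eq]
    exact Int.modEq_iff_dvd
  have hPa : ∀ j, j < k → Pki j = a := by
    intro j hj; simp [Pki, hj]
  have hPk : Pki k = i + a / 2 := by simp [Pki]
  have hPk1 : Pki (k + 1) = i := by simp [Pki]
  have hP0 : ∀ j, k + 1 < j → Pki j = 0 := by
    intro j hj
    simp [Pki, show ¬ (j < k) from by omega, show j ≠ k from by omega,
      show j ≠ k + 1 from by omega]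
  -- the key non-membership fact: (a/2)+1 does not divide i
  have hndvd_i : ¬ ((((a / 2 : ℕ) : ℤ) + 1) ∣ (i : ℤ)) := key i (by omega) (by omega)
  constructor
  · funext n
    simp only [downDisp]
    rcases lt_trichotomy n k with hn | hn | hn
    · rw [hPa n hn]
      rcases eq_or_lt_of_le (Nat.succ_le_of_lt hn) with hn1 | hn1
      · -- n + 1 = k : membership fails
        have hmemf : ¬ (((a : ℕ) : ℤ) - n - 1 ∈ Λ) := by
          rw [hmem]
          have heq : (i : ℤ) - k - 2 - (((a : ℕ) : ℤ) - n - 1) =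
              (i : ℤ) - 2 * (((a / 2 : ℕ) : ℤ) + 1) := by omega
          rw [heq]
          intro h
          apply hndvd_i
          have h2 := dvd_add h (dvd_mul_right (((a / 2 : ℕ) : ℤ) + 1) 2)
          rwa [show (i : ℤ) - 2 * (((a / 2 : ℕ) : ℤ) + 1) + (((a / 2 : ℕ) : ℤ) + 1) * 2
            = (i : ℤ) from by ring] at h2
        rw [if_neg (fun hc => hmemf hc.1)]
        simp [hn]
      · -- n + 1 < k : no strict decrease
        rw [hPa (n + 1) hn1, if_neg (by rintro ⟨-, h⟩; exact lt_irrefl _ h)]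
        simp [hn]
    · subst hn
      have hmemt : ((i + a / 2 : ℕ) : ℤ) - n - 1 ∈ Λ := by
        rw [hmem]
        have heq : (i : ℤ) - n - 2 - (((i + a / 2 : ℕ) : ℤ) - n - 1)
            = -(((a / 2 : ℕ) : ℤ) + 1) := by push_cast; ring
        rw [heq]
        exact dvd_neg.mpr dvd_rfl
      rw [hPk, hPk1, if_pos ⟨hmemt, by omega⟩, if_neg (lt_irrefl n), if_pos rfl]
      omega
    · rcases eq_or_lt_of_le (Nat.succ_le_of_lt hn) with hn1 | hn1
      · have hnk : n = k + 1 := hn1.symm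
        subst hnk
        have hmemt : ((i : ℕ) : ℤ) - (k + 1 : ℕ) - 1 ∈ Λ := by
          rw [hmem]
          have heq : (i : ℤ) - k - 2 - (((i : ℕ) : ℤ) - ((k + 1 : ℕ) : ℤ) - 1) = 0 := by
            push_cast; ring
          rw [heq]
          exact dvd_zero _
        rw [hPk1, hP0 (k + 1 + 1) (by omega), if_pos ⟨hmemt, by omega⟩]
        simp [show ¬ (k + 1 < k) from by omega]
      · rw [hP0 n (by omega), hP0 (n + 1) (by omega),
          if_neg (by rintro ⟨-, h⟩; exact absurd h (by omega))]
        simp [show ¬ (n < k) from by omega, show n ≠ k from by omega,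
          show n ≠ k + 1 from by omega]
  · intro ha
    funext n
    simp only [upDisp]
    rcases lt_trichotomy n k with hn | hn | hn
    · rw [hPa n hn]
      rcases Nat.eq_zero_or_pos n with hn0 | hn0
      · subst hn0
        have hmemf : ¬ (((a : ℕ) : ℤ) - ((0 : ℕ) : ℤ) ∈ Λ) := by
          rw [hmem]
          intro h
          apply ha
          rw [Int.modEq_iff_dvd]
          rwa [show (i : ℤ) - k - 2 - (((a : ℕ) : ℤ) - ((0 : ℕ) : ℤ))
            = (i : ℤ) - (k : ℤ) - 2 - (a : ℤ) from by push_cast; ring] at h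
        rw [if_neg (fun hc => hmemf hc.1)]
      · rw [hPa (n - 1) (by omega),
          if_neg (by rintro ⟨-, h0 | hlt⟩ <;> omega)]
    · subst hn
      have hmemf : ¬ (((i + a / 2 : ℕ) : ℤ) - (n : ℤ) ∈ Λ) := by
        rw [hmem]
        have heq : (i : ℤ) - n - 2 - (((i + a / 2 : ℕ) : ℤ) - (n : ℤ))
            = -((((a / 2 : ℕ) : ℤ) + 1) + 1) := by push_cast; ring
        rw [heq]
        intro h
        have h3 := dvd_neg.mp h
        have h4 := dvd_sub h3 (dvd_refl ((((a / 2 : ℕ) : ℤ) + 1)))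
        rw [show (((a / 2 : ℕ) : ℤ) + 1) + 1 - ((((a / 2 : ℕ) : ℤ) + 1)) = 1 from by ring] at h4
        exact key 1 one_pos (by omega) h4
      rw [hPk, if_neg (fun hc => hmemf hc.1)]
    · rcases eq_or_lt_of_le (Nat.succ_le_of_lt hn) with hn1 | hn1
      · have hnk : n = k + 1 := hn1.symm
        subst hnk
        have hmemf : ¬ (((i : ℕ) : ℤ) - ((k + 1 : ℕ) : ℤ) ∈ Λ) := by
          rw [hmem]
          have heq : (i : ℤ) - k - 2 - (((i : ℕ) : ℤ) - ((k + 1 : ℕ) : ℤ)) = -1 := by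
            push_cast; ring
          rw [heq]
          intro h
          exact key 1 one_pos (by omega) (dvd_neg.mp h)
        rw [hPk1, if_neg (fun hc => hmemf hc.1)]
      · rcases eq_or_lt_of_le (Nat.succ_le_of_lt hn1) with hn2 | hn2
        · have hnk : n = k + 2 := hn2.symm
          subst hnk
          have hmemf : ¬ (((0 : ℕ) : ℤ) - ((k + 2 : ℕ) : ℤ) ∈ Λ) := by
            rw [hmem]
            have heq : (i : ℤ) - k - 2 - (((0 : ℕ) : ℤ) - ((k + 2 : ℕ) : ℤ)) = (i : ℤ) := by
              push_cast; ring
            rw [heq]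
            exact hndvd_i
          rw [hP0 (k + 2) (by omega), if_neg (fun hc => hmemf hc.1)]
        · rw [hP0 n (by omega), hP0 (n - 1) (by omega),
            if_neg (by rintro ⟨-, h0 | hlt⟩ <;> omega)]
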